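/- Let j ≥ 2 and let f ∈ C[0,1] be increasing with x ↦ f(x^{1/j}) convex on [0,1]. Then for all n ≥ j and x ∈ [0,1], f(x) ≤ B_{n,j}(f;x) ≤ B_n(f;x), where B_{n,j} is the AKR operator and B_n the classical Bernstein operator. -/

import Mathlib

open Set Finset

/-- Bernstein basis polynomial `p_{n,k}(x) = C(n,k) x^k (1-x)^{n-k}`. -/
noncomputable def bp (n k : ℕ) (x : ℝ) : ℝ :=
  (n.choose k : ℝ) * x ^ k * (1 - x) ^ (n - k)

/-- AKR node `t_{n,k}^j = (k(k-1)⋯(k-j+1)/(n(n-1)⋯(n-j+1)))^{1/j}`. -/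
noncomputable def akrNode (n j k : ℕ) : ℝ :=
  ((∏ i ∈ Finset.range j, ((k : ℝ) - i)) / (∏ i ∈ Finset.range j, ((n : ℝ) - i))) ^ ((j : ℝ)⁻¹)

/-- Classical Bernstein operator. -/
noncomputable def bern (n : ℕ) (f : ℝ → ℝ) (x : ℝ) : ℝ :=
  ∑ k ∈ Finset.range (n + 1), f ((k : ℝ) / n) * bp n k x

/-- Aldaz–Kounchev–Render operator. -/
noncomputable def akr (n j : ℕ) (f : ℝ → ℝ) (x : ℝ) : ℝ :=
  ∑ k ∈ Finset.range (n + 1), f (akrNode n j k) * bp n k x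

/-- Bivariate tensor-product Bernstein operator. -/
noncomputable def bern2 (n m : ℕ) (f : ℝ → ℝ → ℝ) (x y : ℝ) : ℝ :=
  ∑ i ∈ Finset.range (n + 1), ∑ k ∈ Finset.range (m + 1),
    f ((i : ℝ) / n) ((k : ℝ) / m) * bp n i x * bp m k y

/-- Bivariate tensor-product AKR operator. -/
noncomputable def akr2 (n m j : ℕ) (f : ℝ → ℝ → ℝ) (x y : ℝ) : ℝ :=
  ∑ i ∈ Finset.range (n + 1), ∑ k ∈ Finset.range (m + 1),
    f (akrNode n j i) (akrNode m j k) * bp n i x * bp m k y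

lemma prod_cast_desc (j k : ℕ) :
    (∏ i ∈ Finset.range j, ((k : ℝ) - i)) = (k.descFactorial j : ℝ) := by
  rcases le_or_gt j k with h | h
  · rw [Nat.descFactorial_eq_prod_range, Nat.cast_prod]
    refine Finset.prod_congr rfl fun i hi => ?_
    rw [Nat.cast_sub (le_trans (le_of_lt (Finset.mem_range.mp hi)) h)]
  · rw [Nat.descFactorial_eq_zero_iff_lt.2 h, Nat.cast_zero]
    exact Finset.prod_eq_zero (Finset.mem_range.mpr h) (by simp)

lemma akrNode_eq (n j k : ℕ) :
    akrNode n j k = ((k.descFactorial j : ℝ) / (n.descFactorial j : ℝ)) ^ ((j : ℝ)⁻¹) := by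
  rw [akrNode, prod_cast_desc, prod_cast_desc]

lemma bp_nonneg {n k : ℕ} {x : ℝ} (hx : x ∈ Icc (0:ℝ) 1) : 0 ≤ bp n k x := by
  obtain ⟨h0, h1⟩ := hx
  exact mul_nonneg (mul_nonneg (by positivity) (pow_nonneg h0 _)) (pow_nonneg (by linarith) _)

lemma sum_bp (n : ℕ) (x : ℝ) : ∑ k ∈ Finset.range (n + 1), bp n k x = 1 := by
  calc ∑ k ∈ Finset.range (n + 1), bp n k x
      = ∑ k ∈ Finset.range (n + 1), x ^ k * (1 - x) ^ (n - k) * (n.choose k : ℝ) :=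
        Finset.sum_congr rfl fun k _ => by rw [bp]; ring
    _ = (x + (1 - x)) ^ n := (add_pow x (1 - x) n).symm
    _ = 1 := by norm_num

lemma desc_choose (n j m : ℕ) (h : j + m ≤ n) :
    (j + m).descFactorial j * n.choose (j + m) = n.descFactorial j * (n - j).choose m := by
  rw [Nat.descFactorial_eq_factorial_mul_choose, Nat.descFactorial_eq_factorial_mul_choose,
    mul_assoc, mul_assoc, mul_comm ((j+m).choose j), Nat.choose_mul (Nat.le_add_right _ _),
    Nat.add_sub_cancel_left]

lemma moment (n j : ℕ) (hn : j ≤ n) (x : ℝ) :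
    ∑ k ∈ Finset.range (n + 1), (k.descFactorial j : ℝ) * bp n k x
      = (n.descFactorial j : ℝ) * x ^ j := by
  rw [← Finset.sum_range_add_sum_Ico _ (by omega : j ≤ n + 1)]
  have h0 : ∑ k ∈ Finset.range j, (k.descFactorial j : ℝ) * bp n k x = 0 := by
    refine Finset.sum_eq_zero fun k hk => ?_
    rw [Nat.descFactorial_eq_zero_iff_lt.2 (Finset.mem_range.mp hk), Nat.cast_zero, zero_mul]
  rw [h0, zero_add, Finset.sum_Ico_eq_sum_range]
  have hrange : n + 1 - j = (n - j) + 1 := by omega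
  rw [hrange]
  have key : ∀ m ∈ Finset.range (n - j + 1),
      ((j + m).descFactorial j : ℝ) * bp n (j + m) x
        = (n.descFactorial j : ℝ) * x ^ j *
          (x ^ m * (1 - x) ^ (n - j - m) * ((n - j).choose m : ℝ)) := by
    intro m hm
    have hjm : j + m ≤ n := by
      have := Finset.mem_range.mp hm; omega
    have hcast : ((j + m).descFactorial j : ℝ) * (n.choose (j + m) : ℝ)
        = (n.descFactorial j : ℝ) * ((n - j).choose m : ℝ) :=
      mod_cast congrArg (Nat.cast (R := ℝ)) (desc_choose n j m hjm)
    have hsub : n - (j + m) = n - j - m := by omega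
    rw [bp, hsub, pow_add]
    linear_combination (x ^ j * x ^ m * (1 - x) ^ (n - j - m)) * hcast
  rw [Finset.sum_congr rfl key, ← Finset.mul_sum, ← add_pow x (1 - x) (n - j)]
  norm_num

lemma descFactorial_pos' {n j : ℕ} (hn : j ≤ n) : 0 < n.descFactorial j :=
  Nat.pos_of_ne_zero fun h => absurd (Nat.descFactorial_eq_zero_iff_lt.1 h) (not_lt.2 hn)

lemma ratio_le_pow {n j k : ℕ} (hkn : k ≤ n) (hn : j ≤ n) (hn0 : 0 < n) :
    (k.descFactorial j : ℝ) / (n.descFactorial j : ℝ) ≤ ((k : ℝ) / n) ^ j := by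
  have hD : (0:ℝ) < (n.descFactorial j : ℝ) := by exact_mod_cast descFactorial_pos' hn
  have hnpos : (0:ℝ) < (n:ℝ) ^ j := by positivity
  rw [div_pow, div_le_div_iff₀ hD hnpos]
  have hnat : k.descFactorial j * n ^ j ≤ k ^ j * n.descFactorial j := by
    have h1 : k.descFactorial j * n ^ j = ∏ i ∈ Finset.range j, ((k - i) * n) := by
      rw [Finset.prod_mul_distrib, ← Nat.descFactorial_eq_prod_range,
        Finset.prod_const, Finset.card_range]
    have h2 : k ^ j * n.descFactorial j = ∏ i ∈ Finset.range j, (k * (n - i)) := by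
      rw [Finset.prod_mul_distrib, ← Nat.descFactorial_eq_prod_range,
        Finset.prod_const, Finset.card_range]
    rw [h1, h2]
    refine Finset.prod_le_prod' fun i _ => ?_
    rcases le_or_gt i k with h | h
    · rw [Nat.sub_mul, Nat.mul_sub]
      exact Nat.sub_le_sub_left
        (le_trans (le_of_eq (Nat.mul_comm k i)) (Nat.mul_le_mul_left i hkn)) _
    · rw [Nat.sub_eq_zero_of_le h.le, Nat.zero_mul]; exact Nat.zero_le _
  exact_mod_cast hnat

lemma node_mem (n j k : ℕ) (hj : 0 < j) (hkn : k ≤ n) (hn : j ≤ n) :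
    akrNode n j k ∈ Icc (0:ℝ) 1 ∧ akrNode n j k ≤ (k : ℝ) / n := by
  have hn0 : 0 < n := lt_of_lt_of_le hj hn
  have hD : (0:ℝ) < (n.descFactorial j : ℝ) := by exact_mod_cast descFactorial_pos' hn
  have hs0 : (0:ℝ) ≤ (k.descFactorial j : ℝ) / (n.descFactorial j : ℝ) :=
    div_nonneg (by positivity) hD.le
  have hkn' : (0:ℝ) ≤ (k:ℝ)/n := div_nonneg (by positivity) (by positivity)
  have hle : akrNode n j k ≤ (k : ℝ) / n := by
    rw [akrNode_eq]
    calc ((k.descFactorial j : ℝ) / (n.descFactorial j : ℝ)) ^ ((j:ℝ)⁻¹)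
        ≤ (((k:ℝ)/n) ^ j) ^ ((j:ℝ)⁻¹) :=
          Real.rpow_le_rpow hs0 (ratio_le_pow hkn hn hn0) (by positivity)
      _ = (k:ℝ)/n := by
          rw [← Real.rpow_natCast ((k:ℝ)/n) j, ← Real.rpow_mul hkn',
            mul_inv_cancel₀ (by exact_mod_cast hj.ne'), Real.rpow_one]
  have hnode0 : (0:ℝ) ≤ akrNode n j k := by
    rw [akrNode_eq]; exact Real.rpow_nonneg hs0 _
  have hkn1 : (k:ℝ)/n ≤ 1 := by
    rw [div_le_one (by positivity)]; exact_mod_cast hkn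
  exact ⟨⟨hnode0, hle.trans hkn1⟩, hle⟩

theorem stmt7 (j n : ℕ) (hj : 2 ≤ j) (hn : j ≤ n) (f : ℝ → ℝ)
    (hfc : ContinuousOn f (Icc 0 1))
    (hmono : MonotoneOn f (Icc 0 1))
    (hconv : ConvexOn ℝ (Icc 0 1) (fun x => f (x ^ ((j : ℝ)⁻¹)))) :
    ∀ x ∈ Icc (0:ℝ) 1, f x ≤ akr n j f x ∧ akr n j f x ≤ bern n f x := by
  intro x hx
  obtain ⟨h0x, h1x⟩ := hx
  have hj0 : 0 < j := by omega
  have hn0 : 0 < n := lt_of_lt_of_le hj0 hn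
  have hD : (0:ℝ) < (n.descFactorial j : ℝ) := by exact_mod_cast descFactorial_pos' hn
  set s : ℕ → ℝ := fun k => (k.descFactorial j : ℝ) / (n.descFactorial j : ℝ) with hs
  have hsmem : ∀ k ∈ Finset.range (n + 1), s k ∈ Icc (0:ℝ) 1 := by
    intro k hk
    have hkn : k ≤ n := by have := Finset.mem_range.mp hk; omega
    refine ⟨div_nonneg (by positivity) hD.le, ?_⟩
    calc s k ≤ ((k:ℝ)/n) ^ j := ratio_le_pow hkn hn hn0
      _ ≤ 1 ^ j := pow_le_pow_left₀ (div_nonneg (by positivity) (by positivity))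
            (by rw [div_le_one (by positivity)]; exact_mod_cast hkn) j
      _ = 1 := one_pow j
  have hws : ∑ k ∈ Finset.range (n + 1), bp n k x • s k = x ^ j := by
    have : ∑ k ∈ Finset.range (n + 1), bp n k x • s k
        = (∑ k ∈ Finset.range (n + 1), (k.descFactorial j : ℝ) * bp n k x)
            / (n.descFactorial j : ℝ) := by
      rw [Finset.sum_div]
      exact Finset.sum_congr rfl fun k _ => by rw [smul_eq_mul, hs]; ring
    rw [this, moment n j hn x, mul_div_cancel_left₀ _ hD.ne']
  constructor
  · -- lower bound via Jensen
    have hjen := hconv.map_sum_le (fun k hk => bp_nonneg ⟨h0x, h1x⟩)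
      (sum_bp n x) hsmem
    rw [hws] at hjen
    have hxj : (x ^ j) ^ ((j:ℝ)⁻¹) = x := by
      rw [← Real.rpow_natCast x j, ← Real.rpow_mul h0x,
        mul_inv_cancel₀ (by exact_mod_cast hj0.ne'), Real.rpow_one]
    calc f x = f ((x ^ j) ^ ((j:ℝ)⁻¹)) := by rw [hxj]
      _ ≤ ∑ k ∈ Finset.range (n + 1), bp n k x * f (s k ^ ((j:ℝ)⁻¹)) := hjen
      _ = akr n j f x := by
          rw [akr]
          exact Finset.sum_congr rfl fun k _ => by rw [akrNode_eq, hs]; ring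
  · -- upper bound via monotonicity
    rw [akr, bern]
    refine Finset.sum_le_sum fun k hk => ?_
    have hkn : k ≤ n := by have := Finset.mem_range.mp hk; omega
    obtain ⟨hmem, hle⟩ := node_mem n j k hj0 hkn hn
    have hknm : (k:ℝ)/n ∈ Icc (0:ℝ) 1 := by
      constructor
      · positivity
      · rw [div_le_one (by positivity)]; exact_mod_cast hkn
    exact mul_le_mul_of_nonneg_right (hmono hmem hknm hle) (bp_nonneg ⟨h0x, h1x⟩)
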